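/- (Lemma 3.3, directional sublinearity of χ_0) Let d = 1 and suppose ℙ satisfies Assumption 1.1. Then for each ê ∈ {−1, +1}, ℙ-almost surely, lim_{n→∞} n^{−1} χ_0(ω, nê) = 0, where χ_0 = Π − Φ_0. -/

import Mathlib

open MeasureTheory ProbabilityTheory Filter Set
open scoped NNReal ENNReal

noncomputable section

/-- The space of time-dependent, symmetric, positive conductances on the
nearest-neighbour edges of `ℤ` (conductances vanish on non-edges). -/
abbrev Env : Type :=
  {ω : ℝ → ℤ → ℤ → ℝ //
    ∀ t x y, ((x - y).natAbs = 1 → 0 < ω t x y) ∧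
      ((x - y).natAbs ≠ 1 → ω t x y = 0) ∧ ω t x y = ω t y x}

/-- Time-space shift `τ_{s,z}`. -/
def shift (s : ℝ) (z : ℤ) (ω : Env) : Env :=
  ⟨fun t x y => ω.1 (t + s) (x + z) (y + z), fun t x y => by
    have h : x + z - (y + z) = x - y := by ring
    simpa [h] using ω.2 (t + s) (x + z) (y + z)⟩

/-- Assumption 1.1: `P` is a probability measure, stationary and ergodic with respect to
time-space shifts, with first positive and negative moments of the conductances finite. -/
structure Assumption (P : Measure Env) : Prop where
  isProb : IsProbabilityMeasure P
  stationary : ∀ (s : ℝ) (z : ℤ), MeasurePreserving (shift s z) P P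
  ergodic : ∀ A : Set Env, MeasurableSet A →
    (∀ (s : ℝ) (z : ℤ), shift s z ⁻¹' A = A) → P A = 0 ∨ P A = 1
  momPlus : ∀ (t : ℝ) (x y : ℤ), (x - y).natAbs = 1 →
    Integrable (fun ω : Env => ω.1 t x y) P
  momMinus : ∀ (t : ℝ) (x y : ℤ), (x - y).natAbs = 1 →
    Integrable (fun ω : Env => (ω.1 t x y)⁻¹) P

/-- The time-dependent generator `(L_t^ω f)(x) = Σ_{y∼x} ω_t(x,y)(f(y)-f(x))`. -/
def gen (ω : Env) (t : ℝ) (f : ℤ → ℝ) (x : ℤ) : ℝ :=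
  ω.1 t x (x + 1) * (f (x + 1) - f x) + ω.1 t x (x - 1) * (f (x - 1) - f x)


/-- A measurable random field satisfying the (space) cocycle property. -/
def Cocycle1 (P : Measure Env) (Ψ : Env → ℤ → ℝ) : Prop :=
  (∀ x, Measurable fun ω => Ψ ω x) ∧
    ∀ᵐ ω ∂P, ∀ x y : ℤ, Ψ (shift 0 x ω) (y - x) = Ψ ω y - Ψ ω x

/-- The squared `L²_cov`-norm `E[Σ_{x∼0} ω_0(0,x) |Ψ(ω,x)|²]`. -/
def covNormSq1 (P : Measure Env) (Ψ : Env → ℤ → ℝ) : ℝ≥0∞ :=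
  ∫⁻ ω, ENNReal.ofReal (ω.1 0 0 1 * (Ψ ω 1) ^ 2 + ω.1 0 0 (-1) * (Ψ ω (-1)) ^ 2) ∂P

/-- Membership in `L²_cov`. -/
def MemL2cov1 (P : Measure Env) (Ψ : Env → ℤ → ℝ) : Prop :=
  Cocycle1 P Ψ ∧ covNormSq1 P Ψ < ⊤

/-- Membership in `L²_pot`, the closure in `L²_cov` of the gradients
`Dφ(ω,x) = φ(τ_{0,x}ω) - φ(ω)` of bounded measurable functions `φ`. -/
def MemL2pot1 (P : Measure Env) (Ψ : Env → ℤ → ℝ) : Prop :=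
  MemL2cov1 P Ψ ∧
    ∀ ε : ℝ, 0 < ε → ∃ φ : Env → ℝ, Measurable φ ∧ (∃ C : ℝ, ∀ ω, |φ ω| ≤ C) ∧
      covNormSq1 P (fun ω x => Ψ ω x - (φ (shift 0 x ω) - φ ω)) < ENNReal.ofReal ε

/-- The harmonic coordinate
`Φ(ω,t,x) = Φ₀(τ_{t,0}ω, x) - ∫_0^t (L_s^ω Φ₀(τ_{s,0}ω, ·))(0) ds`. -/
def PhiF1 (Φ₀ : Env → ℤ → ℝ) (ω : Env) (t : ℝ) (x : ℤ) : ℝ :=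
  Φ₀ (shift t 0 ω) x - ∫ s in (0 : ℝ)..t, gen ω s (fun y => Φ₀ (shift s 0 ω) y) 0

/-- `χ₀ = Π - Φ₀`. -/
def chi01 (Φ₀ : Env → ℤ → ℝ) (ω : Env) (x : ℤ) : ℝ := (x : ℝ) - Φ₀ ω x

/-- The corrector `χ(ω,t,x) = Π(ω,x) - Φ(ω,t,x)`. -/
def chi1 (Φ₀ : Env → ℤ → ℝ) (ω : Env) (t : ℝ) (x : ℤ) : ℝ := (x : ℝ) - PhiF1 Φ₀ ω t x

/-- `Φ₀` has the properties of Theorem 2.3 (in `d = 1`): `Φ₀ ∈ L²_cov`,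
`χ₀ = Π - Φ₀ ∈ L²_pot`, and for `P`-a.e. `ω` the function `Φ` built from `Φ₀` satisfies
`Φ(ω,0,0) = 0` and is, for every `x`, differentiable at a.e. `t` with
`∂_t Φ(ω,t,x) = -(L_t^ω Φ(ω,t,·))(x)`. -/
def IsHarmonicCoord1 (P : Measure Env) (Φ₀ : Env → ℤ → ℝ) : Prop :=
  MemL2cov1 P Φ₀ ∧ MemL2pot1 P (chi01 Φ₀) ∧
    ∀ᵐ ω ∂P, PhiF1 Φ₀ ω 0 0 = 0 ∧ ∀ x : ℤ, ∀ᵐ t : ℝ ∂volume,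
      HasDerivAt (fun s => PhiF1 Φ₀ ω s x)
        (-(gen ω t (fun y => PhiF1 Φ₀ ω t y) x)) t

namespace Garsia
variable {α : Type*} [MeasurableSpace α] {μ : Measure α} [IsProbabilityMeasure μ]

/-- Birkhoff sum. -/
def bS (T : α → α) (f : α → ℝ) (n : ℕ) (x : α) : ℝ := ∑ k ∈ Finset.range n, f (T^[k] x)

/-- Running maximum `max_{0 ≤ n ≤ N} S_n` (nonnegative part included via `S_0 = 0`). -/
def Mp (T : α → α) (f : α → ℝ) : ℕ → α → ℝ
  | 0 => fun _ => 0
  | (N+1) => fun x => max (Mp T f N x) (bS T f (N+1) x)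

variable {T : α → α} {f : α → ℝ}

lemma bS_zero (x : α) : bS T f 0 x = 0 := by simp [bS]

lemma bS_succ (n : ℕ) (x : α) : bS T f (n+1) x = f x + bS T f n (T x) := by
  unfold bS
  rw [Finset.sum_range_succ']
  simp [Function.iterate_succ_apply, add_comm]

lemma Mp_nonneg (N : ℕ) (x : α) : 0 ≤ Mp T f N x := by
  induction N with
  | zero => simp [Mp]
  | succ N ih => exact le_trans ih (le_max_left _ _)

lemma bS_le_Mp {n N : ℕ} (h : n ≤ N) (x : α) : bS T f n x ≤ Mp T f N x := by
  induction N with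
  | zero => simp_all [Mp, Nat.le_zero, bS_zero]
  | succ N ih =>
    rcases Nat.lt_or_ge n (N+1) with h' | h'
    · exact le_trans (ih (Nat.lt_succ_iff.mp h')) (le_max_left _ _)
    · have : n = N + 1 := le_antisymm h h'
      subst this; exact le_max_right _ _
set_option linter.unusedSectionVars false

lemma Mp_attained {N : ℕ} {x : α} (h : 0 < Mp T f N x) :
    ∃ n, 1 ≤ n ∧ n ≤ N ∧ Mp T f N x = bS T f n x := by
  induction N with
  | zero => simp [Mp] at h
  | succ N ih =>
    rcases le_or_gt (bS T f (N+1) x) (Mp T f N x) with h' | h'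
    · have hm : Mp T f (N+1) x = Mp T f N x := max_eq_left h'
      rw [hm] at h ⊢
      obtain ⟨n, h1, h2, h3⟩ := ih h
      exact ⟨n, h1, h2.trans (Nat.le_succ N), h3⟩
    · exact ⟨N+1, Nat.succ_le_succ (Nat.zero_le N), le_refl _,
        max_eq_right h'.le⟩

lemma Mp_key {N : ℕ} {x : α} (h : 0 < Mp T f N x) :
    Mp T f N x ≤ f x + Mp T f N (T x) := by
  obtain ⟨n, h1, h2, h3⟩ := Mp_attained h
  obtain ⟨m, rfl⟩ := Nat.exists_eq_add_of_le h1
  rw [h3, show (1:ℕ) + m = m + 1 from add_comm 1 m, bS_succ]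
  have : bS T f m (T x) ≤ Mp T f N (T x) :=
    bS_le_Mp (le_trans (Nat.le_add_left m 1) h2) (T x)
  linarith

lemma measurable_bS (hT : Measurable T) (hf : Measurable f) (n : ℕ) :
    Measurable (bS T f n) := by
  apply Finset.measurable_sum
  exact fun k _ => hf.comp (hT.iterate k)

lemma measurable_Mp (hT : Measurable T) (hf : Measurable f) (N : ℕ) :
    Measurable (Mp T f N) := by
  induction N with
  | zero => exact measurable_const
  | succ N ih => exact Measurable.max ih (measurable_bS hT hf (N+1))

lemma integrable_bS (hT : MeasurePreserving T μ μ) (hf : Integrable f μ) (n : ℕ) :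
    Integrable (bS T f n) μ := by
  apply integrable_finset_sum
  exact fun k _ => (hT.iterate k).integrable_comp hf.aestronglyMeasurable |>.mpr hf

lemma integrable_Mp (hT : MeasurePreserving T μ μ) (hf : Integrable f μ) (N : ℕ) :
    Integrable (Mp T f N) μ := by
  induction N with
  | zero => exact (integrable_const 0).congr (by simp [Mp])
  | succ N ih => exact ih.sup (integrable_bS hT hf (N+1))

/-- Garsia's maximal ergodic lemma: `∫_{Mp_N > 0} f ≥ 0`. -/
lemma garsia (hT : MeasurePreserving T μ μ) (hfm : Measurable f) (hf : Integrable f μ)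
    (N : ℕ) : 0 ≤ ∫ x in {x | 0 < Mp T f N x}, f x ∂μ := by
  set E : Set α := {x | 0 < Mp T f N x} with hE
  have hEm : MeasurableSet E := measurableSet_lt measurable_const (measurable_Mp hT.measurable hfm N)
  have hMi : Integrable (Mp T f N) μ := integrable_Mp hT hf N
  have hMTi : Integrable (fun x => Mp T f N (T x)) μ := hT.integrable_comp hMi.aestronglyMeasurable |>.mpr hMi
  -- ∫_E f ≥ ∫_E (Mp - Mp∘T)
  have key : ∫ x in E, (Mp T f N x - Mp T f N (T x)) ∂μ ≤ ∫ x in E, f x ∂μ := by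
    apply setIntegral_mono_on ((hMi.sub hMTi).integrableOn) (hf.integrableOn) hEm
    intro x hx
    have := Mp_key (T := T) (f := f) hx
    simp only [Pi.sub_apply]
    linarith
  -- ∫_E Mp = ∫ Mp  (since Mp = 0 off E)
  have h1 : ∫ x in E, Mp T f N x ∂μ = ∫ x, Mp T f N x ∂μ := by
    rw [← integral_indicator hEm]
    congr 1
    funext x
    by_cases hx : x ∈ E
    · simp [indicator_of_mem hx]
    · have h0 : Mp T f N x = 0 :=
        le_antisymm (not_lt.mp hx) (Mp_nonneg N x)
      simp [indicator_of_notMem hx, h0]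
  -- ∫_E Mp∘T ≤ ∫ Mp∘T = ∫ Mp
  have h2 : ∫ x in E, Mp T f N (T x) ∂μ ≤ ∫ x, Mp T f N x ∂μ := by
    have h3 : ∫ x in E, Mp T f N (T x) ∂μ ≤ ∫ x, Mp T f N (T x) ∂μ :=
      setIntegral_le_integral hMTi (Filter.Eventually.of_forall fun x => Mp_nonneg N (T x))
    have hasm : AEStronglyMeasurable (Mp T f N) (Measure.map T μ) :=
      hT.map_eq.symm ▸ hMi.aestronglyMeasurable
    have h4 : ∫ x, Mp T f N (T x) ∂μ = ∫ x, Mp T f N x ∂μ := by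
      rw [← integral_map hT.aemeasurable hasm, hT.map_eq]
    linarith
  have h5 : ∫ x in E, (Mp T f N x - Mp T f N (T x)) ∂μ
      = ∫ x in E, Mp T f N x ∂μ - ∫ x in E, Mp T f N (T x) ∂μ :=
    integral_sub hMi.integrableOn hMTi.integrableOn
  linarith

/-- The maximal ergodic inequality: for `h ≥ 0` integrable and `λ > 0`,
`μ {∃ n ≥ 1, S_n h > λ n} ≤ (∫ h) / λ`. -/
lemma maximal_ineq (hT : MeasurePreserving T μ μ) {h : α → ℝ} (hhm : Measurable h)
    (hh : Integrable h μ) (hh0 : ∀ x, 0 ≤ h x) {lam : ℝ} (hlam : 0 < lam) :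
    μ {x | ∃ n, 1 ≤ n ∧ lam * n < bS T h n x}
      ≤ ENNReal.ofReal ((∫ x, h x ∂μ) / lam) := by
  set f : α → ℝ := fun x => h x - lam with hf_def
  have hfm : Measurable f := hhm.sub measurable_const
  have hfi : Integrable f μ := hh.sub (integrable_const lam)
  have hbS : ∀ n x, bS T f n x = bS T h n x - lam * n := by
    intro n x
    simp only [bS, hf_def, Finset.sum_sub_distrib, Finset.sum_const, Finset.card_range,
      nsmul_eq_mul, mul_comm]
  -- the union of the sets E_N is the target set
  have hunion : {x | ∃ n, 1 ≤ n ∧ lam * n < bS T h n x}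
      = ⋃ N, {x | 0 < Mp T f N x} := by
    ext x
    simp only [mem_setOf_eq, mem_iUnion]
    constructor
    · rintro ⟨n, hn1, hn2⟩
      refine ⟨n, lt_of_lt_of_le ?_ (bS_le_Mp le_rfl x)⟩
      rw [hbS]; linarith
    · rintro ⟨N, hN⟩
      obtain ⟨n, h1, _, h3⟩ := Mp_attained hN
      refine ⟨n, h1, ?_⟩
      have := h3 ▸ hN
      rw [hbS] at this; linarith
  -- each E_N has the bound
  have hbound : ∀ N, μ {x | 0 < Mp T f N x} ≤ ENNReal.ofReal ((∫ x, h x ∂μ) / lam) := by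
    intro N
    set E : Set α := {x | 0 < Mp T f N x} with hE
    have hEm : MeasurableSet E :=
      measurableSet_lt measurable_const (measurable_Mp hT.measurable hfm N)
    have hg := garsia hT hfm hfi N
    have h1 : ∫ x in E, f x ∂μ = ∫ x in E, h x ∂μ - lam * (μ E).toReal := by
      rw [hf_def]
      rw [integral_sub hh.integrableOn (integrable_const lam).integrableOn]
      simp [setIntegral_const, mul_comm, measureReal_def]
    have h2 : ∫ x in E, h x ∂μ ≤ ∫ x, h x ∂μ :=
      setIntegral_le_integral hh (Filter.Eventually.of_forall hh0)
    have h3 : lam * (μ E).toReal ≤ ∫ x, h x ∂μ := by linarith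
    have h4 : (μ E).toReal ≤ (∫ x, h x ∂μ) / lam := by
      rw [le_div_iff₀ hlam]; linarith
    calc μ E = ENNReal.ofReal ((μ E).toReal) := (ENNReal.ofReal_toReal (measure_ne_top μ E)).symm
      _ ≤ ENNReal.ofReal ((∫ x, h x ∂μ) / lam) := ENNReal.ofReal_le_ofReal h4
  rw [hunion]
  -- monotone union
  have hmono : Monotone (fun N => {x | 0 < Mp T f N x}) := by
    intro N M hNM
    intro x hx
    simp only [mem_setOf_eq] at hx ⊢
    obtain ⟨n, h1, h2, h3⟩ := Mp_attained hx
    exact lt_of_lt_of_le (h3 ▸ hx) (bS_le_Mp (h2.trans hNM) x)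
  rw [hmono.directed_le.measure_iUnion]
  exact iSup_le hbound

end Garsia

section L1
variable {α : Type*} [MeasurableSpace α] {μ : Measure α} [IsProbabilityMeasure μ]

/-- Cauchy–Schwarz step: if `∫ w g² ≤ ε²` (weighted L² bound) and `w⁻¹` is integrable,
then `g` is integrable with `∫|g| ≤ √(∫ w⁻¹) · ε`. -/
lemma l1_of_weighted_l2 {w g : α → ℝ} (hwm : Measurable w) (hgm : Measurable g)
    (hwpos : ∀ x, 0 < w x) (hwinv : Integrable (fun x => (w x)⁻¹) μ) {ε : ℝ} (hε : 0 ≤ ε)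
    (hB : ∫⁻ x, ENNReal.ofReal (w x * (g x) ^ 2) ∂μ ≤ ENNReal.ofReal (ε ^ 2)) :
    Integrable g μ ∧ ∫ x, |g x| ∂μ ≤ Real.sqrt (∫ x, (w x)⁻¹ ∂μ) * ε := by
  set A : α → ℝ≥0∞ := fun x => ENNReal.ofReal ((w x)⁻¹) with hA
  set B : α → ℝ≥0∞ := fun x => ENNReal.ofReal (w x * (g x) ^ 2) with hBdef
  have hAm : Measurable A := ENNReal.measurable_ofReal.comp (hwm.inv)
  have hBm : Measurable B := ENNReal.measurable_ofReal.comp (hwm.mul (hgm.pow_const 2))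
  have hpq : Real.HolderConjugate 2 2 := Real.HolderConjugate.two_two
  have key := ENNReal.lintegral_mul_le_Lp_mul_Lq μ hpq
    ((hAm.pow_const (1/2 : ℝ)).aemeasurable) ((hBm.pow_const (1/2 : ℝ)).aemeasurable)
  have hpt : ∀ x, (A x ^ (1/2 : ℝ)) * (B x ^ (1/2 : ℝ)) = ENNReal.ofReal |g x| := by
    intro x
    rw [← ENNReal.mul_rpow_of_nonneg _ _ (by norm_num : (0:ℝ) ≤ 1/2)]
    have h1 : A x * B x = ENNReal.ofReal ((g x) ^ 2) := by
      rw [hA, hBdef, ← ENNReal.ofReal_mul (inv_nonneg.2 (hwpos x).le)]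
      congr 1
      exact inv_mul_cancel_left₀ (hwpos x).ne' _
    rw [h1, ← sq_abs, ENNReal.ofReal_pow (abs_nonneg _),
      ← ENNReal.rpow_natCast (ENNReal.ofReal |g x|) 2, ← ENNReal.rpow_mul]
    norm_num
  have hsq : ∀ (y : ℝ≥0∞), (y ^ (1/2:ℝ)) ^ (2:ℝ) = y := by
    intro y
    rw [← ENNReal.rpow_mul]
    norm_num
  have hIA : ∫⁻ x, A x ∂μ = ENNReal.ofReal (∫ x, (w x)⁻¹ ∂μ) :=
    (ofReal_integral_eq_lintegral_ofReal hwinv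
      (Filter.Eventually.of_forall fun x => inv_nonneg.2 (hwpos x).le)).symm
  have hCm0 : 0 ≤ ∫ x, (w x)⁻¹ ∂μ :=
    integral_nonneg fun x => inv_nonneg.2 (hwpos x).le
  have hmain : ∫⁻ x, ENNReal.ofReal |g x| ∂μ
      ≤ ENNReal.ofReal (Real.sqrt (∫ x, (w x)⁻¹ ∂μ) * ε) := by
    have e1 : ∫⁻ x, ENNReal.ofReal |g x| ∂μ
        = ∫⁻ x, (fun x => A x ^ (1/2:ℝ)) x * (fun x => B x ^ (1/2:ℝ)) x ∂μ := by
      apply lintegral_congr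
      intro x
      exact (hpt x).symm
    rw [e1]
    refine le_trans key ?_
    have e2 : ∫⁻ x, ((fun x => A x ^ (1/2:ℝ)) x) ^ (2:ℝ) ∂μ = ∫⁻ x, A x ∂μ :=
      lintegral_congr fun x => hsq (A x)
    have e3 : ∫⁻ x, ((fun x => B x ^ (1/2:ℝ)) x) ^ (2:ℝ) ∂μ = ∫⁻ x, B x ∂μ :=
      lintegral_congr fun x => hsq (B x)
    rw [e2, e3, hIA]
    have b1 : (ENNReal.ofReal (∫ x, (w x)⁻¹ ∂μ)) ^ (1/2 : ℝ)
        = ENNReal.ofReal (Real.sqrt (∫ x, (w x)⁻¹ ∂μ)) := by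
      rw [ENNReal.ofReal_rpow_of_nonneg hCm0 (by norm_num), Real.sqrt_eq_rpow]
    have b2 : (∫⁻ x, B x ∂μ) ^ (1/2 : ℝ) ≤ ENNReal.ofReal ε := by
      refine le_trans (ENNReal.rpow_le_rpow hB (by norm_num)) ?_
      rw [ENNReal.ofReal_rpow_of_nonneg (by positivity) (by norm_num)]
      rw [show (ε^2) ^ (1/2:ℝ) = ε from by
        rw [← Real.rpow_natCast ε 2, ← Real.rpow_mul hε]; norm_num]
    calc (ENNReal.ofReal (∫ x, (w x)⁻¹ ∂μ)) ^ (1/2:ℝ) * (∫⁻ x, B x ∂μ) ^ (1/2:ℝ)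
        ≤ ENNReal.ofReal (Real.sqrt (∫ x, (w x)⁻¹ ∂μ)) * ENNReal.ofReal ε := by
          rw [b1]; exact mul_le_mul' le_rfl b2
      _ = ENNReal.ofReal (Real.sqrt (∫ x, (w x)⁻¹ ∂μ) * ε) :=
          (ENNReal.ofReal_mul (Real.sqrt_nonneg _)).symm
  have hint : Integrable g μ := by
    refine ⟨hgm.aestronglyMeasurable, ?_⟩
    rw [hasFiniteIntegral_iff_norm]
    refine lt_of_le_of_lt ?_ (lt_of_le_of_lt hmain ENNReal.ofReal_lt_top)
    simp [Real.norm_eq_abs]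
  refine ⟨hint, ?_⟩
  have : ∫ x, |g x| ∂μ = (∫⁻ x, ENNReal.ofReal |g x| ∂μ).toReal := by
    rw [integral_eq_lintegral_of_nonneg_ae (Filter.Eventually.of_forall fun x => abs_nonneg _)
      (hgm.abs.aestronglyMeasurable)]
  rw [this]
  calc (∫⁻ x, ENNReal.ofReal |g x| ∂μ).toReal
      ≤ (ENNReal.ofReal (Real.sqrt (∫ x, (w x)⁻¹ ∂μ) * ε)).toReal :=
        ENNReal.toReal_mono ENNReal.ofReal_ne_top hmain
    _ = Real.sqrt (∫ x, (w x)⁻¹ ∂μ) * ε := ENNReal.toReal_ofReal (by positivity)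

end L1

set_option linter.unusedSectionVars false in
lemma shift_zero (ω : Env) : shift 0 0 ω = ω := by
  apply Subtype.ext
  funext t x y
  simp [shift]

lemma shift_shift (a b : ℤ) (ω : Env) : shift 0 a (shift 0 b ω) = shift 0 (a + b) ω := by
  apply Subtype.ext
  funext t x y
  simp [shift, add_assoc]

lemma iterate_shift (e : ℤ) (k : ℕ) (ω : Env) :
    (shift 0 e)^[k] ω = shift 0 ((k : ℤ) * e) ω := by
  induction k with
  | zero => simp [shift_zero]
  | succ k ih =>
    rw [Function.iterate_succ_apply', ih, shift_shift]
    congr 1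
    push_cast
    ring

lemma measurable_eval (t : ℝ) (x y : ℤ) : Measurable fun ω : Env => ω.1 t x y := by
  have h1 : Measurable fun F : ℝ → ℤ → ℤ → ℝ => F t x y :=
    (measurable_pi_apply y).comp ((measurable_pi_apply x).comp (measurable_pi_apply t))
  exact h1.comp measurable_subtype_coe

/-- Lemma 3.3: directional sublinearity of `χ₀` in `d = 1`: for each `ê ∈ {-1,+1}`,
`P`-almost surely `χ₀(ω, nê)/n → 0`. -/
theorem chi0_directional_sublinearity
    (P : Measure Env) (hP : Assumption P)
    (Φ₀ : Env → ℤ → ℝ) (hΦ : IsHarmonicCoord1 P Φ₀) :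
    ∀ e : ℤ, e = 1 ∨ e = -1 →
      ∀ᵐ ω ∂P, Tendsto (fun n : ℕ => (n : ℝ)⁻¹ * chi01 Φ₀ ω (n * e))
        atTop (nhds 0) := by
  intro e he
  haveI : IsProbabilityMeasure P := hP.isProb
  have hT : MeasurePreserving (shift 0 e) P P := hP.stationary 0 e
  have hnat : (0 - e).natAbs = 1 := by rcases he with rfl | rfl <;> decide
  have hwpos : ∀ ω : Env, 0 < ω.1 0 0 e := fun ω => (ω.2 0 0 e).1 hnat
  have hwm : Measurable fun ω : Env => ω.1 0 0 e := measurable_eval 0 0 e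
  have hwinv : Integrable (fun ω : Env => (ω.1 0 0 e)⁻¹) P := hP.momMinus 0 0 e hnat
  set Cm : ℝ := ∫ ω, (ω.1 0 0 e)⁻¹ ∂P with hCmdef
  have hΦm : ∀ x : ℤ, Measurable fun ω => Φ₀ ω x := hΦ.1.1.1
  have hchim : ∀ x : ℤ, Measurable fun ω => chi01 Φ₀ ω x := fun x =>
    measurable_const.sub (hΦm x)
  -- a.s. cocycle property along the whole orbit
  have hco : ∀ᵐ ω ∂P, ∀ (k : ℕ) (x y : ℤ),
      Φ₀ (shift 0 x ((shift 0 e)^[k] ω)) (y - x)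
        = Φ₀ ((shift 0 e)^[k] ω) y - Φ₀ ((shift 0 e)^[k] ω) x :=
    ae_all_iff.2 fun k => (hT.iterate k).quasiMeasurePreserving.ae hΦ.1.1.2
  -- a.s. telescoping of the corrector along the direction e
  have htel : ∀ᵐ ω ∂P, ∀ n : ℕ,
      chi01 Φ₀ ω ((n : ℤ) * e)
        = ∑ k ∈ Finset.range n, chi01 Φ₀ ((shift 0 e)^[k] ω) e := by
    filter_upwards [hco] with ω hω
    intro n
    induction n with
    | zero =>
      have h0 := hω 0 0 0
      rw [Function.iterate_zero_apply, shift_zero] at h0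
      have hzero : Φ₀ ω 0 = 0 := by simpa using h0
      simp [chi01, hzero]
    | succ n ih =>
      have hkey := hω 0 ((n : ℤ) * e) (((n : ℤ) + 1) * e)
      rw [Function.iterate_zero_apply] at hkey
      have he1 : ((n : ℤ) + 1) * e - (n : ℤ) * e = e := by ring
      rw [he1] at hkey
      rw [Finset.sum_range_succ, ← ih, iterate_shift e n ω]
      simp only [chi01]
      push_cast
      push_cast at hkey
      linarith [hkey]
  rw [ae_iff]
  have hsub1 : {ω | ¬ Tendsto (fun n : ℕ => (n : ℝ)⁻¹ * chi01 Φ₀ ω (n * e))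
        atTop (nhds 0)}
      ⊆ ⋃ j : ℕ, {ω | ¬ ∀ᶠ n : ℕ in atTop,
          |(n : ℝ)⁻¹ * chi01 Φ₀ ω ((n : ℤ) * e)| ≤ 2 / ((j : ℝ) + 1)} := by
    intro ω hω
    simp only [mem_iUnion, mem_setOf_eq]
    by_contra hc
    push_neg at hc
    apply hω
    rw [NormedAddCommGroup.tendsto_nhds_zero]
    intro ε hε
    obtain ⟨j, hj⟩ := exists_nat_gt (2 / ε)
    filter_upwards [hc j] with n hn
    rw [Real.norm_eq_abs]
    refine lt_of_le_of_lt hn ?_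
    rw [div_lt_iff₀ (by positivity)]
    have h2 : 2 / ε < (j : ℝ) + 1 := hj.trans_le (by linarith)
    calc (2 : ℝ) = ε * (2 / ε) := by field_simp
      _ < ε * ((j : ℝ) + 1) := by exact mul_lt_mul_of_pos_left h2 hε
  refine measure_mono_null hsub1 (measure_iUnion_null fun j => ?_)
  set lam : ℝ := ((j : ℝ) + 1)⁻¹ with hlamdef
  have hlam : 0 < lam := by positivity
  have hδ : ∀ δ : ℝ, 0 < δ →
      P {ω | ¬ ∀ᶠ n : ℕ in atTop,
          |(n : ℝ)⁻¹ * chi01 Φ₀ ω ((n : ℤ) * e)| ≤ 2 / ((j : ℝ) + 1)}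
        ≤ ENNReal.ofReal δ := by
    intro δ hδ0
    set ε : ℝ := lam * δ / (2 * (Real.sqrt Cm + 1)) with hεdef
    have hsnn : 0 ≤ Real.sqrt Cm := Real.sqrt_nonneg Cm
    have hε : 0 < ε := by positivity
    obtain ⟨φ, hφm, ⟨C, hC⟩, hcov⟩ := hΦ.2.1.2 (ε ^ 2) (by positivity)
    set g : Env → ℝ := fun ω => chi01 Φ₀ ω e - (φ (shift 0 e ω) - φ ω) with hgdef
    have hgm : Measurable g := (hchim e).sub ((hφm.comp hT.measurable).sub hφm)
    have hBle : ∫⁻ ω, ENNReal.ofReal (ω.1 0 0 e * (g ω) ^ 2) ∂P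
        ≤ ENNReal.ofReal (ε ^ 2) := by
      simp only [covNormSq1] at hcov
      refine le_trans (lintegral_mono fun ω => ENNReal.ofReal_le_ofReal ?_) hcov.le
      have h1 : (0 : ℝ) ≤ ω.1 0 0 1 := ((ω.2 0 0 1).1 (by decide)).le
      have h2 : (0 : ℝ) ≤ ω.1 0 0 (-1) := ((ω.2 0 0 (-1)).1 (by decide)).le
      rcases he with rfl | rfl
      · have h3 := mul_nonneg h2
          (sq_nonneg (chi01 Φ₀ ω (-1) - (φ (shift 0 (-1) ω) - φ ω)))
        simp only [hgdef]
        linarith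
      · have h3 := mul_nonneg h1
          (sq_nonneg (chi01 Φ₀ ω 1 - (φ (shift 0 1 ω) - φ ω)))
        simp only [hgdef]
        linarith
    obtain ⟨hgint, hgL1⟩ := l1_of_weighted_l2 hwm hgm hwpos hwinv hε.le hBle
    have hmax := Garsia.maximal_ineq hT hgm.abs hgint.abs
      (fun ω => abs_nonneg _) hlam
    have harith : (∫ ω, |g ω| ∂P) / lam ≤ δ := by
      rw [div_le_iff₀ hlam]
      have key : Real.sqrt Cm * ε ≤ δ * lam := by
        have h3 : Real.sqrt Cm * ε
            = lam * δ * (Real.sqrt Cm / (2 * (Real.sqrt Cm + 1))) := by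
          rw [hεdef]; ring
        have h4 : Real.sqrt Cm / (2 * (Real.sqrt Cm + 1)) ≤ 1 := by
          rw [div_le_one (by linarith)]; linarith
        calc Real.sqrt Cm * ε
            = lam * δ * (Real.sqrt Cm / (2 * (Real.sqrt Cm + 1))) := h3
          _ ≤ lam * δ * 1 := mul_le_mul_of_nonneg_left h4 (by positivity)
          _ = δ * lam := by ring
      have h5 : ∫ ω, |g ω| ∂P ≤ Real.sqrt Cm * ε := hgL1
      linarith
    have hEbound : P {ω | ∃ n, 1 ≤ n ∧
          lam * n < Garsia.bS (shift 0 e) (fun ω => |g ω|) n ω}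
        ≤ ENNReal.ofReal δ :=
      le_trans hmax (ENNReal.ofReal_le_ofReal harith)
    have hNnull : P {ω | ¬ ∀ n : ℕ, chi01 Φ₀ ω ((n : ℤ) * e)
        = ∑ k ∈ Finset.range n, chi01 Φ₀ ((shift 0 e)^[k] ω) e} = 0 :=
      ae_iff.1 htel
    have hincl : {ω | ¬ ∀ᶠ n : ℕ in atTop,
          |(n : ℝ)⁻¹ * chi01 Φ₀ ω ((n : ℤ) * e)| ≤ 2 / ((j : ℝ) + 1)}
        ⊆ {ω | ∃ n, 1 ≤ n ∧
            lam * n < Garsia.bS (shift 0 e) (fun ω => |g ω|) n ω}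
          ∪ {ω | ¬ ∀ n : ℕ, chi01 Φ₀ ω ((n : ℤ) * e)
              = ∑ k ∈ Finset.range n, chi01 Φ₀ ((shift 0 e)^[k] ω) e} := by
      intro ω hω
      rw [mem_union]
      by_contra hc
      rw [not_or] at hc
      obtain ⟨hc1, hc2⟩ := hc
      simp only [mem_setOf_eq, not_exists, not_and, not_lt] at hc1
      simp only [mem_setOf_eq, not_not] at hc2
      apply hω
      -- decomposition of the corrector
      have hdec : ∀ n : ℕ, chi01 Φ₀ ω ((n : ℤ) * e)
          = (∑ k ∈ Finset.range n, g ((shift 0 e)^[k] ω))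
            + (φ ((shift 0 e)^[n] ω) - φ ω) := by
        intro n
        rw [hc2 n]
        have hg1 : ∀ k, g ((shift 0 e)^[k] ω)
            = chi01 Φ₀ ((shift 0 e)^[k] ω) e
              - (φ ((shift 0 e)^[k+1] ω) - φ ((shift 0 e)^[k] ω)) := by
          intro k
          rw [hgdef]
          simp only
          rw [Function.iterate_succ_apply']
        rw [Finset.sum_congr rfl fun k _ => hg1 k, Finset.sum_sub_distrib,
          Finset.sum_range_sub (fun k => φ ((shift 0 e)^[k] ω))]
        rw [Function.iterate_zero_apply]
        ring
      obtain ⟨N₀, hN₀⟩ := exists_nat_ge (2 * C / lam)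
      filter_upwards [eventually_ge_atTop (max 1 (N₀ + 1))] with n hn
      have hn1 : 1 ≤ n := le_trans (le_max_left _ _) hn
      have hnN : N₀ + 1 ≤ n := le_trans (le_max_right _ _) hn
      have hnpos : (0 : ℝ) < n := by exact_mod_cast hn1
      have hb1 : |chi01 Φ₀ ω ((n : ℤ) * e)|
          ≤ Garsia.bS (shift 0 e) (fun ω => |g ω|) n ω + 2 * C := by
        rw [hdec n]
        have h5 : |∑ k ∈ Finset.range n, g ((shift 0 e)^[k] ω)|
            ≤ ∑ k ∈ Finset.range n, |g ((shift 0 e)^[k] ω)| :=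
          Finset.abs_sum_le_sum_abs _ _
        have h6 := hC ((shift 0 e)^[n] ω)
        have h7 := hC ω
        have h8 : |φ ((shift 0 e)^[n] ω) - φ ω|
            ≤ |φ ((shift 0 e)^[n] ω)| + |φ ω| := abs_sub _ _
        have h9 : Garsia.bS (shift 0 e) (fun ω => |g ω|) n ω
            = ∑ k ∈ Finset.range n, |g ((shift 0 e)^[k] ω)| := rfl
        calc |(∑ k ∈ Finset.range n, g ((shift 0 e)^[k] ω))
              + (φ ((shift 0 e)^[n] ω) - φ ω)|
            ≤ |∑ k ∈ Finset.range n, g ((shift 0 e)^[k] ω)|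
              + |φ ((shift 0 e)^[n] ω) - φ ω| := abs_add_le _ _
          _ ≤ Garsia.bS (shift 0 e) (fun ω => |g ω|) n ω + 2 * C := by
              rw [h9]; linarith
      have hb2 : Garsia.bS (shift 0 e) (fun ω => |g ω|) n ω ≤ lam * n :=
        hc1 n hn1
      have hb3 : 2 * C ≤ lam * n := by
        have h8 : 2 * C ≤ lam * N₀ := by
          rw [div_le_iff₀ hlam] at hN₀; linarith
        have h9 : (N₀ : ℝ) ≤ n := by
          exact_mod_cast le_trans (Nat.le_succ N₀) hnN
        have h10 : lam * N₀ ≤ lam * n := mul_le_mul_of_nonneg_left h9 hlam.le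
        linarith
      have hfin : |(n : ℝ)⁻¹ * chi01 Φ₀ ω ((n : ℤ) * e)| ≤ 2 * lam := by
        rw [abs_mul, abs_inv, abs_of_nonneg hnpos.le]
        have h11 : |chi01 Φ₀ ω ((n : ℤ) * e)| ≤ 2 * lam * n := by linarith
        calc (n : ℝ)⁻¹ * |chi01 Φ₀ ω ((n : ℤ) * e)|
            ≤ (n : ℝ)⁻¹ * (2 * lam * n) :=
              mul_le_mul_of_nonneg_left h11 (inv_nonneg.2 hnpos.le)
          _ = 2 * lam := by field_simp
      have h12 : 2 / ((j : ℝ) + 1) = 2 * lam := by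
        rw [hlamdef, div_eq_mul_inv]
      rw [h12]
      exact hfin
    calc P {ω | ¬ ∀ᶠ n : ℕ in atTop,
          |(n : ℝ)⁻¹ * chi01 Φ₀ ω ((n : ℤ) * e)| ≤ 2 / ((j : ℝ) + 1)}
        ≤ P ({ω | ∃ n, 1 ≤ n ∧
            lam * n < Garsia.bS (shift 0 e) (fun ω => |g ω|) n ω}
          ∪ {ω | ¬ ∀ n : ℕ, chi01 Φ₀ ω ((n : ℤ) * e)
              = ∑ k ∈ Finset.range n, chi01 Φ₀ ((shift 0 e)^[k] ω) e}) :=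
          measure_mono hincl
      _ ≤ P {ω | ∃ n, 1 ≤ n ∧
            lam * n < Garsia.bS (shift 0 e) (fun ω => |g ω|) n ω}
          + P {ω | ¬ ∀ n : ℕ, chi01 Φ₀ ω ((n : ℤ) * e)
              = ∑ k ∈ Finset.range n, chi01 Φ₀ ((shift 0 e)^[k] ω) e} :=
          measure_union_le _ _
      _ ≤ ENNReal.ofReal δ + 0 := add_le_add hEbound (le_of_eq hNnull)
      _ = ENNReal.ofReal δ := add_zero _
  refine le_antisymm ?_ (by positivity)
  refine ENNReal.le_of_forall_pos_le_add fun r hr _ => ?_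
  rw [zero_add]
  have h13 := hδ r (by exact_mod_cast hr)
  rwa [ENNReal.ofReal_coe_nnreal] at h13

end
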